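/- Let r ≥ 2 and define on the complex vector space V_r with basis e_0, …, e_{r−2} the product e_a • e_b = Σ_{c=0}^{r−2} N_{ab}^c e_c, where N_{ab}^c = (2/r) Σ_{k=1}^{r−1} sin((a+1)kπ/r) sin((b+1)kπ/r) sin((c+1)kπ/r) / sin(kπ/r). Then the vectors v_k = √(2/r) Σ_{a=0}^{r−2} sin((a+1)kπ/r) e_a, for 1 ≤ k ≤ r−1, satisfy v_k • v_l = (√(r/2) / sin(kπ/r)) · δ_{k,l} · v_k. In particular, the rescaled vectors (sin(kπ/r)/√(r/2)) v_k form a basis of idempotents, so (V_r, •) is a semisimple commutative algebra. -/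

import Mathlib

open Real Finset

/-- Verlinde (fusion) structure constants for sl2 at level `r−2`:
`N_{ab}^c = (2/r) Σ_{k=1}^{r−1} sin((a+1)kπ/r) sin((b+1)kπ/r) sin((c+1)kπ/r) / sin(kπ/r)`. -/
noncomputable def Nfus (r a b c : ℕ) : ℝ :=
  (2 / r) * ∑ k ∈ Finset.Icc 1 (r - 1),
    Real.sin ((a + 1) * k * π / r) * Real.sin ((b + 1) * k * π / r) *
      Real.sin ((c + 1) * k * π / r) / Real.sin (k * π / r)

/-- Coordinates of the normalized idempotent vector `v_k` in the basis `e_0, …, e_{r−2}`. -/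
noncomputable def vIdem (r k a : ℕ) : ℝ :=
  Real.sqrt (2 / r) * Real.sin ((a + 1) * k * π / r)

private lemma sumT (r n : ℕ) (hr : 1 ≤ r) (hn1 : 1 ≤ n) (hn2 : n < 2 * r) :
    ∑ j ∈ Finset.range r, Real.cos (j * n * π / r) = (1 - (-1 : ℝ) ^ n) / 2 := by
  have hr0 : (0:ℝ) < r := by exact_mod_cast Nat.lt_of_lt_of_le Nat.zero_lt_one hr
  have hn0 : (1:ℝ) ≤ n := by exact_mod_cast hn1
  have hn2' : (n:ℝ) < 2 * r := by exact_mod_cast hn2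
  set x : ℝ := n * π / (2 * r) with hx
  have hx0 : 0 < x := by
    apply div_pos (by nlinarith [pi_pos]) (by positivity)
  have hxpi : x < π := by
    rw [hx, div_lt_iff₀ (by positivity)]
    nlinarith [pi_pos]
  have hs : Real.sin x ≠ 0 := ne_of_gt (Real.sin_pos_of_pos_of_lt_pi hx0 hxpi)
  have key : ∀ j : ℕ, 2 * Real.sin x * Real.cos (j * n * π / r)
      = Real.sin ((2 * ((j:ℝ) + 1) - 1) * x) - Real.sin ((2 * (j:ℝ) - 1) * x) := by
    intro j
    rw [Real.sin_sub_sin]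
    have h1 : ((2 * ((j:ℝ) + 1) - 1) * x - (2 * (j:ℝ) - 1) * x) / 2 = x := by ring
    have h2 : ((2 * ((j:ℝ) + 1) - 1) * x + (2 * (j:ℝ) - 1) * x) / 2 = (j:ℝ) * n * π / r := by
      rw [hx]; field_simp; ring
    rw [h1, h2]
  have tele := Finset.sum_range_sub (fun j : ℕ => Real.sin ((2 * (j:ℝ) - 1) * x)) r
  have main : 2 * Real.sin x * ∑ j ∈ Finset.range r, Real.cos (j * n * π / r)
      = Real.sin x * (1 - (-1 : ℝ) ^ n) := by
    rw [Finset.mul_sum]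
    have : ∑ j ∈ Finset.range r, 2 * Real.sin x * Real.cos (j * n * π / r)
        = ∑ j ∈ Finset.range r,
            ((fun j : ℕ => Real.sin ((2 * (j:ℝ) - 1) * x)) (j+1)
              - (fun j : ℕ => Real.sin ((2 * (j:ℝ) - 1) * x)) j) := by
      refine Finset.sum_congr rfl fun j _ => ?_
      rw [key j]
      push_cast
      ring_nf
    rw [this, tele]
    have hrx : (2 * (r:ℝ) - 1) * x = n * π - x := by
      rw [hx]; field_simp
    simp only [hrx, Nat.cast_zero]
    rw [Real.sin_nat_mul_pi_sub]
    have : (2 * (0:ℝ) - 1) * x = -x := by ring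
    rw [this, Real.sin_neg]
    ring
  refine mul_left_cancel₀ (a := 2 * Real.sin x) (by positivity) ?_
  rw [main]; ring

private lemma sumC (r n : ℕ) (hr : 1 ≤ r) (hn1 : 1 ≤ n) (hn2 : n < 2 * r) :
    ∑ a ∈ Finset.range (r - 1), Real.cos ((a + 1) * n * π / r)
      = -(1 + (-1 : ℝ) ^ n) / 2 := by
  have hr1 : r - 1 + 1 = r := Nat.succ_pred_eq_of_pos hr
  have h : ∑ j ∈ Finset.range (r - 1 + 1), Real.cos (j * n * π / r)
      = (1 - (-1 : ℝ) ^ n) / 2 := by rw [hr1]; exact sumT r n hr hn1 hn2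
  rw [Finset.sum_range_succ'] at h
  push_cast at h ⊢
  simp only [Nat.cast_zero, zero_mul, zero_div, Real.cos_zero] at h
  linarith [h]

private lemma ortho_diag (r k : ℕ) (hr : 2 ≤ r) (hk1 : 1 ≤ k) (hk2 : k ≤ r - 1) :
    ∑ a ∈ Finset.range (r - 1), Real.sin ((a + 1) * k * π / r) * Real.sin ((a + 1) * k * π / r)
      = (r : ℝ) / 2 := by
  have h2k1 : 1 ≤ 2 * k := by omega
  have h2k2 : 2 * k < 2 * r := by omega
  have hC := sumC r (2 * k) (by omega) h2k1 h2k2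
  have hpt : ∀ a : ℕ, Real.sin ((a + 1) * k * π / r) * Real.sin ((a + 1) * k * π / r)
      = 1 / 2 - Real.cos ((a + 1) * (2 * k : ℕ) * π / r) / 2 := by
    intro a
    have hc2 := Real.cos_two_mul (((a : ℝ) + 1) * k * π / r)
    have hsc := Real.sin_sq_add_cos_sq (((a : ℝ) + 1) * k * π / r)
    have harg : (2 : ℝ) * (((a : ℝ) + 1) * k * π / r) = ((a : ℝ) + 1) * ((2 * k : ℕ) : ℝ) * π / r := by
      push_cast; ring
    rw [harg] at hc2
    linear_combination hsc + hc2 / 2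
  rw [Finset.sum_congr rfl fun a _ => hpt a, Finset.sum_sub_distrib]
  simp only [Finset.sum_const, Finset.card_range, nsmul_eq_mul]
  rw [← Finset.sum_div, hC]
  have hcast : ((r - 1 : ℕ) : ℝ) = (r : ℝ) - 1 := by
    have : 1 ≤ r := by omega
    push_cast [Nat.cast_sub this]; ring
  rw [hcast]
  have : (-1 : ℝ) ^ (2 * k) = 1 := by rw [pow_mul]; norm_num
  rw [this]; ring

private lemma ortho_lt (r k m : ℕ) (hr : 2 ≤ r) (hm1 : 1 ≤ m) (hmk : m < k)
    (hk2 : k ≤ r - 1) :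
    ∑ a ∈ Finset.range (r - 1), Real.sin ((a + 1) * k * π / r) * Real.sin ((a + 1) * m * π / r)
      = 0 := by
  have hC1 := sumC r (k - m) (by omega) (by omega) (by omega)
  have hC2 := sumC r (k + m) (by omega) (by omega) (by omega)
  have hpt : ∀ a : ℕ, Real.sin ((a + 1) * k * π / r) * Real.sin ((a + 1) * m * π / r)
      = Real.cos ((a + 1) * ((k - m : ℕ) : ℝ) * π / r) / 2
        - Real.cos ((a + 1) * ((k + m : ℕ) : ℝ) * π / r) / 2 := by
    intro a
    have h1 : ((a:ℝ) + 1) * ((k - m : ℕ) : ℝ) * π / r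
        = ((a:ℝ) + 1) * k * π / r - ((a:ℝ) + 1) * m * π / r := by
      push_cast [Nat.cast_sub hmk.le]; ring
    have h2 : ((a:ℝ) + 1) * ((k + m : ℕ) : ℝ) * π / r
        = ((a:ℝ) + 1) * k * π / r + ((a:ℝ) + 1) * m * π / r := by
      push_cast; ring
    rw [h1, h2, Real.cos_sub, Real.cos_add]
    ring
  rw [Finset.sum_congr rfl fun a _ => hpt a, Finset.sum_sub_distrib, ← Finset.sum_div,
    ← Finset.sum_div, hC1, hC2]
  have hpar : (-1 : ℝ) ^ (k + m) = (-1 : ℝ) ^ (k - m) := by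
    have : k + m = (k - m) + 2 * m := by omega
    rw [this, pow_add, pow_mul]; norm_num
  rw [hpar]; ring

private lemma ortho (r k m : ℕ) (hr : 2 ≤ r) (hk1 : 1 ≤ k) (hk2 : k ≤ r - 1)
    (hm1 : 1 ≤ m) (hm2 : m ≤ r - 1) :
    ∑ a ∈ Finset.range (r - 1), Real.sin ((a + 1) * k * π / r) * Real.sin ((a + 1) * m * π / r)
      = if k = m then (r : ℝ) / 2 else 0 := by
  rcases lt_trichotomy k m with h | h | h
  · rw [if_neg h.ne, ← ortho_lt r m k hr hk1 h hm2]
    exact Finset.sum_congr rfl fun a _ => mul_comm _ _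
  · subst h; rw [if_pos rfl]; exact ortho_diag r k hr hk1 hk2
  · rw [if_neg h.ne', ← ortho_lt r k m hr hm1 h hk2]

/-- `v_k • v_l = (√(r/2)/sin(kπ/r)) δ_{k,l} v_k`, written in coordinates:
for every basis index `c`, the `e_c`-coordinate of `v_k • v_l` equals the
`e_c`-coordinate of `(√(r/2)/sin(kπ/r)) δ_{k,l} v_k`.  In particular the
rescaled vectors are idempotents, so the fusion algebra is semisimple. -/
theorem stmt_6 (r : ℕ) (hr : 2 ≤ r) (k l : ℕ) (hk1 : 1 ≤ k) (hk2 : k ≤ r - 1)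
    (hl1 : 1 ≤ l) (hl2 : l ≤ r - 1) (c : ℕ) (hc : c ≤ r - 2) :
    ∑ a ∈ Finset.range (r - 1), ∑ b ∈ Finset.range (r - 1),
        vIdem r k a * vIdem r l b * Nfus r a b c
      = Real.sqrt (r / 2) / Real.sin (k * π / r) *
          (if k = l then 1 else 0) * vIdem r k c := by
  have hr0 : (0:ℝ) < r := by exact_mod_cast (by omega : 0 < r)
  have hlmem : l ∈ Finset.Icc 1 (r - 1) := Finset.mem_Icc.mpr ⟨hl1, hl2⟩
  -- Step 1: inner sum over b
  have hb : ∀ a : ℕ,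
      ∑ b ∈ Finset.range (r - 1), vIdem r l b * Nfus r a b c
        = Real.sqrt (2 / r) *
            (Real.sin ((a + 1) * l * π / r) * Real.sin ((c + 1) * l * π / r)
              / Real.sin (l * π / r)) := by
    intro a
    simp only [vIdem, Nfus, Finset.mul_sum]
    rw [Finset.sum_comm]
    have h1 : ∀ j ∈ Finset.Icc 1 (r - 1),
        (∑ b ∈ Finset.range (r - 1),
          Real.sqrt (2 / r) * Real.sin ((b + 1) * l * π / r) *
            (2 / r * (Real.sin ((a + 1) * j * π / r) * Real.sin ((b + 1) * j * π / r) *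
              Real.sin ((c + 1) * j * π / r) / Real.sin (j * π / r))))
        = (if l = j then
            Real.sqrt (2 / r) * (2 / r) * ((r : ℝ) / 2) *
              (Real.sin ((a + 1) * j * π / r) * Real.sin ((c + 1) * j * π / r)
                / Real.sin (j * π / r))
          else 0) := by
      intro j hj
      obtain ⟨hj1, hj2⟩ := Finset.mem_Icc.mp hj
      have := ortho r l j hr hl1 hl2 hj1 hj2
      calc (∑ b ∈ Finset.range (r - 1),
            Real.sqrt (2 / r) * Real.sin ((b + 1) * l * π / r) *
              (2 / r * (Real.sin ((a + 1) * j * π / r) * Real.sin ((b + 1) * j * π / r) *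
                Real.sin ((c + 1) * j * π / r) / Real.sin (j * π / r))))
          = Real.sqrt (2 / r) * (2 / r) *
              (Real.sin ((a + 1) * j * π / r) * Real.sin ((c + 1) * j * π / r)
                / Real.sin (j * π / r)) *
              ∑ b ∈ Finset.range (r - 1),
                Real.sin ((b + 1) * l * π / r) * Real.sin ((b + 1) * j * π / r) := by
            rw [Finset.mul_sum]
            exact Finset.sum_congr rfl fun b _ => by ring
        _ = _ := by
            rw [this]
            by_cases h : l = j <;> simp [h] <;> ring
    rw [Finset.sum_congr rfl h1, Finset.sum_ite_eq, if_pos hlmem]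
    have hone : Real.sqrt (2 / r) * (2 / r) * ((r : ℝ) / 2) = Real.sqrt (2 / r) := by
      field_simp
    rw [hone]
  have step2 : ∀ a ∈ Finset.range (r - 1),
      ∑ b ∈ Finset.range (r - 1), vIdem r k a * vIdem r l b * Nfus r a b c
        = vIdem r k a * (Real.sqrt (2 / r) *
            (Real.sin ((a + 1) * l * π / r) * Real.sin ((c + 1) * l * π / r)
              / Real.sin (l * π / r))) := by
    intro a _
    rw [← hb a, Finset.mul_sum]
    exact Finset.sum_congr rfl fun b _ => (mul_assoc _ _ _)
  rw [Finset.sum_congr rfl step2]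
  have h3 : ∑ a ∈ Finset.range (r - 1), vIdem r k a * (Real.sqrt (2 / r) *
        (Real.sin ((a + 1) * l * π / r) * Real.sin ((c + 1) * l * π / r)
          / Real.sin (l * π / r)))
      = Real.sqrt (2 / r) * Real.sqrt (2 / r) *
          (Real.sin ((c + 1) * l * π / r) / Real.sin (l * π / r)) *
          ∑ a ∈ Finset.range (r - 1),
            Real.sin ((a + 1) * k * π / r) * Real.sin ((a + 1) * l * π / r) := by
    rw [Finset.mul_sum]
    exact Finset.sum_congr rfl fun a _ => by simp only [vIdem]; ring
  rw [h3, ortho r k l hr hk1 hk2 hl1 hl2,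
    Real.mul_self_sqrt (by positivity : (0:ℝ) ≤ 2 / r)]
  simp only [vIdem]
  by_cases hkl : k = l
  · subst hkl
    rw [if_pos rfl, if_pos rfl]
    have hkr : (k : ℝ) < r := by exact_mod_cast (by omega : k < r)
    have hk0 : (0 : ℝ) < k := by exact_mod_cast hk1
    have hsk : Real.sin (k * π / r) ≠ 0 := by
      refine ne_of_gt (Real.sin_pos_of_pos_of_lt_pi ?_ ?_)
      · apply div_pos (by positivity) hr0
      · rw [div_lt_iff₀ hr0]; nlinarith [pi_pos]
    have h4 : Real.sqrt ((r : ℝ) / 2) * Real.sqrt (2 / r) = 1 := by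
      rw [← Real.sqrt_mul (by positivity),
        show ((r : ℝ) / 2) * (2 / r) = 1 by field_simp, Real.sqrt_one]
    field_simp
    rw [mul_assoc _ (Real.sqrt _), ← Real.sqrt_mul (by positivity),
      show ((r:ℝ) / 2) * (2 / (r:ℝ)) = 1 by field_simp, Real.sqrt_one, mul_one]
  · rw [if_neg hkl, if_neg hkl]; ring
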